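/- A two-variable quaternionic slice regular polynomial P vanishes at every point (a, q₂) with q₂ commuting with a if and only if P = (q₁ - a) * P₁ for some P₁ ∈ ℍ[q₁,q₂]; here evaluation of P at (q₁,q₂) with q₁q₂ = q₂q₁ means Σ q₁ⁿ q₂^m a_{n,m}. -/

import Mathlib

/-- Two-variable quaternionic polynomials `Σ q₁ⁿ q₂ᵐ a_{n,m}`, encoded as polynomials in `q₁`
whose coefficients are polynomials in `q₂`; polynomial multiplication is exactly the
double-convolution `*`-product. -/
abbrev Poly2 : Type := Polynomial (Polynomial (Quaternion ℝ))

/-- Evaluation of a one-variable quaternionic polynomial `Σ qⁿ aₙ` at `q`. -/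
noncomputable def qeval (f : Polynomial (Quaternion ℝ)) (q : Quaternion ℝ) : Quaternion ℝ :=
  f.sum fun n a => q ^ n * a

/-- Evaluation of `P = Σ q₁ⁿ q₂ᵐ a_{n,m}` at a point `(a,b)`:  `Σ aⁿ bᵐ a_{n,m}`. -/
noncomputable def evalPair (P : Poly2) (a b : Quaternion ℝ) : Quaternion ℝ :=
  P.sum fun n p => a ^ n * qeval p b

/-- Regular conjugate of a one-variable quaternionic polynomial. -/
noncomputable def qconj (f : Polynomial (Quaternion ℝ)) : Polynomial (Quaternion ℝ) :=
  ∑ n ∈ f.support, Polynomial.monomial n (star (f.coeff n))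

/-- Regular conjugate `P^c` of a two-variable quaternionic polynomial. -/
noncomputable def conj2 (P : Poly2) : Poly2 :=
  ∑ n ∈ P.support, Polynomial.monomial n (qconj (P.coeff n))

/-- Symmetrization `P^s = P * P^c` of a two-variable quaternionic polynomial. -/
noncomputable def sym2 (P : Poly2) : Poly2 := P * conj2 P

open Polynomial
section
variable {R : Type*} [Ring R]

/-- Left evaluation `Σ cⁿ rₙ` of a polynomial over a (possibly noncommutative) ring. -/
noncomputable def lEval (c : R) (f : Polynomial R) : R := f.sum fun n r => c ^ n * r

lemma lEval_add (c : R) (f g : Polynomial R) :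
    lEval c (f + g) = lEval c f + lEval c g := by
  unfold lEval
  rw [Polynomial.sum_add_index] <;> simp [mul_add]

lemma lEval_monomial (c : R) (n : ℕ) (r : R) :
    lEval c (Polynomial.monomial n r) = c ^ n * r := by
  unfold lEval
  rw [Polynomial.sum_monomial_index]
  simp

lemma lEval_zero (c : R) : lEval c 0 = 0 := by simp [lEval]

lemma lEval_C_mul (x c : R) (h : Commute x c) (p : Polynomial R) :
    lEval c (Polynomial.C x * p) = x * lEval c p := by
  induction p using Polynomial.induction_on' with
  | add p q hp hq => rw [mul_add, lEval_add, lEval_add, hp, hq, mul_add]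
  | monomial n r =>
      rw [Polynomial.C_mul_monomial, lEval_monomial, lEval_monomial, ← mul_assoc,
        ← mul_assoc, (h.pow_right n).symm.eq]
end
section
variable {R : Type*} [Ring R]

/-- `lEval c` as an additive monoid hom. -/
noncomputable def lEvalHom (c : R) : Polynomial R →+ R :=
  { toFun := lEval c, map_zero' := lEval_zero c, map_add' := lEval_add c }

lemma lEval_sub (c : R) (f g : Polynomial R) :
    lEval c (f - g) = lEval c f - lEval c g :=
  map_sub (lEvalHom c) f g

lemma lEval_X_mul (c : R) (p : Polynomial R) :
    lEval c (Polynomial.X * p) = c * lEval c p := by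
  induction p using Polynomial.induction_on' with
  | add p q hp hq => rw [mul_add, lEval_add, lEval_add, hp, hq, mul_add]
  | monomial n r =>
      rw [Polynomial.X_mul_monomial, lEval_monomial, lEval_monomial, pow_succ',
        mul_assoc]

lemma lEval_X_sub_C_mul (c : R) (p : Polynomial R) :
    lEval c ((Polynomial.X - Polynomial.C c) * p) = 0 := by
  rw [sub_mul, lEval_sub, lEval_X_mul, lEval_C_mul c c (Commute.refl c), sub_self]

lemma exists_lEval_factor (c : R) (P : Polynomial R) :
    ∃ Q, P = (Polynomial.X - Polynomial.C c) * Q + Polynomial.C (lEval c P) := by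
  have hpow : ∀ n : ℕ, ∃ Q : Polynomial R,
      (Polynomial.X : Polynomial R) ^ n
        = (Polynomial.X - Polynomial.C c) * Q + Polynomial.C (c ^ n) := by
    intro n
    refine ⟨∑ i ∈ Finset.range n, Polynomial.X ^ i * (Polynomial.C c) ^ (n - 1 - i), ?_⟩
    rw [(Polynomial.commute_X (Polynomial.C c)).mul_geom_sum₂, Polynomial.C_pow]
    abel
  induction P using Polynomial.induction_on' with
  | add p q hp hq =>
      obtain ⟨Qp, hQp⟩ := hp
      obtain ⟨Qq, hQq⟩ := hq
      refine ⟨Qp + Qq, ?_⟩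
      conv_lhs => rw [hQp, hQq]
      rw [lEval_add, map_add, mul_add]
      abel
  | monomial n r =>
      obtain ⟨Q, hQ⟩ := hpow n
      refine ⟨Q * Polynomial.C r, ?_⟩
      rw [lEval_monomial, ← Polynomial.C_mul_X_pow_eq_monomial, ← Polynomial.X_pow_mul]
      conv_lhs => rw [hQ]
      rw [add_mul, mul_assoc, ← Polynomial.C_mul]

lemma lEval_eq_zero_iff (c : R) (P : Polynomial R) :
    lEval c P = 0 ↔ ∃ Q, P = (Polynomial.X - Polynomial.C c) * Q := by
  constructor
  · intro h
    obtain ⟨Q, hQ⟩ := exists_lEval_factor c P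
    exact ⟨Q, by rw [hQ, h, map_zero, add_zero]⟩
  · rintro ⟨Q, rfl⟩
    exact lEval_X_sub_C_mul c Q
end

lemma qeval_eq_lEval (f : Polynomial (Quaternion ℝ)) (q : Quaternion ℝ) :
    qeval f q = lEval q f := rfl

lemma evalPair_eq_lEval (P : Poly2) (a b : Quaternion ℝ) (hab : b * a = a * b) :
    evalPair P a b = qeval (lEval (Polynomial.C a) P) b := by
  have hcomm : Commute a b := (Commute.symm hab : _)
  induction P using Polynomial.induction_on' with
  | add p q hp hq =>
      unfold evalPair at *
      rw [Polynomial.sum_add_index, lEval_add, qeval_eq_lEval, lEval_add, hp, hq,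
        qeval_eq_lEval, qeval_eq_lEval]
      · intro n; simp [qeval_eq_lEval, lEval_zero]
      · intro n f g; rw [qeval_eq_lEval, lEval_add, mul_add, qeval_eq_lEval, qeval_eq_lEval]
  | monomial n p =>
      unfold evalPair
      rw [Polynomial.sum_monomial_index, lEval_monomial, ← Polynomial.C_pow,
        qeval_eq_lEval, qeval_eq_lEval, lEval_C_mul _ _ (hcomm.pow_left n)]
      simp [qeval_eq_lEval, lEval_zero]

lemma slice_lemma (a : Quaternion ℝ) (r : Polynomial (Quaternion ℝ))
    (h : ∀ b : Quaternion ℝ, b * a = a * b → qeval r b = 0) : r = 0 := by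
  obtain ⟨s, hs1, hs2⟩ : ∃ s : Quaternion ℝ, s * s = -1 ∧ Commute s a := by
    by_cases him : a.im = 0
    · refine ⟨⟨0, 1, 0, 0⟩, ?_, ?_⟩
      · change (⟨0, 1, 0, 0⟩ : Quaternion ℝ) * ⟨0, 1, 0, 0⟩ = -1
        ext <;> simp [Quaternion.re_mul, Quaternion.imI_mul, Quaternion.imJ_mul,
          Quaternion.imK_mul]
      · have ha : a = ((a.re : ℝ) : Quaternion ℝ) := by
          have h2 := a.re_add_im
          rw [him, add_zero] at h2
          exact h2.symm
        rw [ha]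
        exact (Quaternion.coe_commute a.re _).symm
    · have hcim : Commute a.im a := by
        have h2 : Commute a.im ((a.re : Quaternion ℝ) + a.im) :=
          ((Quaternion.coe_commute a.re a.im).symm).add_right (Commute.refl _)
        rwa [a.re_add_im] at h2
      have hn : ‖a.im‖ ≠ 0 := norm_ne_zero_iff.mpr him
      refine ⟨‖a.im‖⁻¹ • a.im, ?_, hcim.smul_left _⟩
      have hsq : a.im * a.im = -((Quaternion.normSq a.im : ℝ) : Quaternion ℝ) := by
        rw [← sq]
        exact Quaternion.sq_eq_neg_normSq.mpr a.re_im
      rw [smul_mul_smul_comm, hsq, Quaternion.normSq_eq_norm_mul_self, smul_neg,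
        ← Quaternion.coe_smul, smul_eq_mul]
      field_simp
      simp
  set φ : ℂ →ₐ[ℝ] Quaternion ℝ := Complex.liftAux s hs1 with hφdef
  have hφa : ∀ z : ℂ, (φ z) * a = a * (φ z) := by
    intro z
    have hc : Commute (φ z) a := by
      rw [hφdef, Complex.liftAux_apply]
      exact Commute.add_left (Algebra.commutes z.re a) (hs2.smul_left z.im)
    exact hc.eq
  letI : Module ℂ (Quaternion ℝ) := Module.compHom (Quaternion ℝ) (φ.toRingHom : ℂ →+* Quaternion ℝ)
  have hsmul : ∀ (z : ℂ) (q : Quaternion ℝ), z • q = φ z * q := fun _ _ => rfl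
  refine Polynomial.ext fun n => ?_
  rw [Polynomial.coeff_zero]
  rw [← Module.forall_dual_apply_eq_zero_iff ℂ (r.coeff n)]
  intro ℓ
  set pl : Polynomial ℂ := ∑ m ∈ r.support, Polynomial.monomial m (ℓ (r.coeff m)) with hpl
  have hplcoeff : ∀ k, pl.coeff k = ℓ (r.coeff k) := by
    intro k
    rw [hpl, Polynomial.finset_sum_coeff]
    simp only [Polynomial.coeff_monomial]
    rw [Finset.sum_ite_eq' r.support k (fun m => ℓ (r.coeff m))]
    by_cases hk : k ∈ r.support
    · simp [hk]
    · simp [hk, Polynomial.notMem_support_iff.mp hk]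
  have hpleval : ∀ z : ℂ, pl.eval z = ℓ (qeval r (φ z)) := by
    intro z
    rw [qeval, Polynomial.sum_def, map_sum ℓ, hpl, Polynomial.eval_finset_sum]
    apply Finset.sum_congr rfl
    intro m _
    rw [Polynomial.eval_monomial]
    have hzm : (φ z) ^ m * r.coeff m = (z ^ m) • (r.coeff m) := by
      rw [hsmul, map_pow]
    rw [hzm, map_smul, smul_eq_mul, mul_comm]
  have hpl0 : pl = 0 := by
    apply Polynomial.funext
    intro z
    rw [hpleval z, h (φ z) (hφa z), map_zero, Polynomial.eval_zero]
  have hfin := hplcoeff n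
  rw [hpl0, Polynomial.coeff_zero] at hfin
  exact hfin.symm

theorem vanishing_on_a_times_Ca_iff_left_factor (P : Poly2) (a : Quaternion ℝ) :
    (∀ q₂ : Quaternion ℝ, q₂ * a = a * q₂ → evalPair P a q₂ = 0) ↔
    ∃ P₁ : Poly2, P = (Polynomial.X - Polynomial.C (Polynomial.C a)) * P₁ := by
  constructor
  · intro h
    rw [← lEval_eq_zero_iff]
    apply slice_lemma a
    intro b hb
    rw [← evalPair_eq_lEval P a b hb]
    exact h b hb
  · rintro ⟨Q, rfl⟩ b hb
    rw [evalPair_eq_lEval _ _ _ hb, lEval_X_sub_C_mul]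
    simp [qeval_eq_lEval, lEval_zero]
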